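/- Let H be an undirected graph, k ≥ 3, and let G be the directed graph obtained from H by subdividing each edge e = {u,v} into a new vertex w_e with arcs (u, w_e), (v, w_e). If H admits a proper k-coloring, then there exists an allocation π of the vertices of G to k agents such that Σ_{i=1}^{k} δ_π(i) = k·|V(G)| − Σ_{v ∈ V(G)} |succ[v]|, i.e., the total dissatisfaction attains its minimum possible value. -/

import Mathlib

/-- `u` is dominated by the set `P` of allocated items: some `v ∈ P` equals `u`
or has a directed path to `u`. -/
def Dominated {V : Type*} (A : V → V → Prop) (P : Set V) (u : V) : Prop :=
  ∃ v ∈ P, Relation.ReflTransGen A v u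

/-- Dissatisfaction of an agent receiving the set `P`: the number of vertices not
dominated by `P`. -/
noncomputable def diss {V : Type*} (A : V → V → Prop) (P : Set V) : ℕ :=
  {u : V | ¬ Dominated A P u}.ncard

/-- Satisfaction of an agent receiving the set `P`: the number of vertices
dominated by `P`. -/
noncomputable def sat {V : Type*} (A : V → V → Prop) (P : Set V) : ℕ :=
  {u : V | Dominated A P u}.ncard

/-- The directed graph with arc relation `A` is acyclic. -/
def Acyclic {V : Type*} (A : V → V → Prop) : Prop :=
  ∀ v, ¬ Relation.TransGen A v v

/-- `P` is an antichain: no vertex of `P` is reachable from another vertex of `P`. -/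
def IsAntichainIn {V : Type*} (A : V → V → Prop) (P : Set V) : Prop :=
  ∀ x ∈ P, ∀ y ∈ P, x ≠ y → ¬ Relation.ReflTransGen A x y

/-- The subdivision orientation of an undirected graph `H`. -/
def SubdivArc {V : Type*} (H : SimpleGraph V) :
    (V ⊕ H.edgeSet) → (V ⊕ H.edgeSet) → Prop :=
  fun x y =>
    match x, y with
    | Sum.inl u, Sum.inr e => u ∈ e.val
    | _, _ => False

lemma subdiv_arc_cases {V : Type*} {H : SimpleGraph V} {v u : V ⊕ H.edgeSet}
    (h : SubdivArc H v u) :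
    ∃ (a : V) (e : H.edgeSet), v = Sum.inl a ∧ u = Sum.inr e ∧ a ∈ e.val := by
  rcases v with a | a <;> rcases u with b | b <;> simp [SubdivArc] at h ⊢
  exact h

lemma subdiv_rtg {V : Type*} (H : SimpleGraph V) (v u : V ⊕ H.edgeSet) :
    Relation.ReflTransGen (SubdivArc H) v u ↔ v = u ∨ SubdivArc H v u := by
  constructor
  · intro h
    induction h with
    | refl => exact Or.inl rfl
    | tail h1 h2 ih =>
      rcases ih with rfl | hA
      · exact Or.inr h2
      · obtain ⟨a, e, rfl, rfl, -⟩ := subdiv_arc_cases hA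
        obtain ⟨a', e', he, -, -⟩ := subdiv_arc_cases h2
        exact absurd he (by simp)
  · rintro (rfl | h)
    · exact Relation.ReflTransGen.refl
    · exact Relation.ReflTransGen.single h

lemma exists_third (k : ℕ) (hk : 3 ≤ k) (a b : Fin k) : ∃ i : Fin k, i ≠ a ∧ i ≠ b := by
  classical
  by_contra h
  push_neg at h
  have hsub : (Finset.univ : Finset (Fin k)) ⊆ {a, b} := by
    intro i _
    by_cases hia : i = a
    · simp [hia]
    · simp [h i hia]
  have h1 := Finset.card_le_card hsub
  simp at h1
  have h2 : ({a,b} : Finset (Fin k)).card ≤ 2 := Finset.card_insert_le _ _ |>.trans (by simp)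
  omega

theorem stmt9 {V : Type*} [Fintype V] [DecidableEq V]
    (H : SimpleGraph V) [DecidableRel H.Adj]
    (k : ℕ) (hk : 3 ≤ k)
    (c : V → Fin k) (hc : ∀ u v, H.Adj u v → c u ≠ c v) :
    ∃ π : Fin k → Set (V ⊕ H.edgeSet),
      (∀ i j, i ≠ j → Disjoint (π i) (π j)) ∧
      ∑ i, diss (SubdivArc H) (π i) =
        k * Fintype.card (V ⊕ H.edgeSet) -
          ∑ v : V ⊕ H.edgeSet,
            {u : V ⊕ H.edgeSet | Relation.ReflTransGen (SubdivArc H) v u}.ncard := by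
  classical
  have hpick : ∀ e : H.edgeSet, ∃ i : Fin k, ∀ u : V, u ∈ e.val → c u ≠ i := by
    rintro ⟨z, hz⟩
    induction z using Sym2.ind with
    | _ a b =>
      obtain ⟨i, hia, hib⟩ := exists_third k hk (c a) (c b)
      refine ⟨i, fun u hu => ?_⟩
      rcases Sym2.mem_iff.mp hu with rfl | rfl
      · exact fun h => hia h.symm
      · exact fun h => hib h.symm
  choose g hg using hpick
  set f : V ⊕ H.edgeSet → Fin k := Sum.elim c g with hf
  refine ⟨fun i => f ⁻¹' {i}, ?_, ?_⟩
  · intro i j hij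
    rw [Set.disjoint_left]
    rintro x hx hy
    exact hij (hx.symm.trans hy)
  set R : V ⊕ H.edgeSet → Finset (V ⊕ H.edgeSet) :=
    fun v => Set.toFinset {u | Relation.ReflTransGen (SubdivArc H) v u} with hR
  have hmemR : ∀ v u, u ∈ R v ↔ (v = u ∨ SubdivArc H v u) := by
    intro v u
    rw [hR]
    simp only [Set.mem_toFinset, Set.mem_setOf_eq, subdiv_rtg]
  have hdisj : ∀ v w : V ⊕ H.edgeSet, f v = f w → v ≠ w → Disjoint (R v) (R w) := by
    intro v w hfv hvw
    rw [Finset.disjoint_left]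
    intro u hu hu'
    rw [hmemR] at hu hu'
    rcases hu with rfl | hu
    · rcases hu' with rfl | hu'
      · exact hvw rfl
      · obtain ⟨a, e, rfl, rfl, hae⟩ := subdiv_arc_cases hu'
        simp only [hf, Sum.elim_inl, Sum.elim_inr] at hfv
        exact hg e a hae hfv.symm
    · rcases hu' with rfl | hu'
      · obtain ⟨a, e, rfl, rfl, hae⟩ := subdiv_arc_cases hu
        simp only [hf, Sum.elim_inl, Sum.elim_inr] at hfv
        exact hg e a hae hfv
      · obtain ⟨a, e1, hv1, hu1, hae⟩ := subdiv_arc_cases hu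
        obtain ⟨b, e2, hv2, hu2, hbe⟩ := subdiv_arc_cases hu'
        subst hv1; subst hv2
        obtain rfl : e2 = e1 := by rw [hu1] at hu2; simpa using hu2.symm
        clear hu1 hu2 hu hu'
        have hab : a ≠ b := fun h => hvw (by rw [h])
        have hedge : (e2 : Sym2 V) = s(a, b) := (Sym2.mem_and_mem_iff hab).mp ⟨hae, hbe⟩
        have hadj : H.Adj a b := H.mem_edgeSet.mp (hedge ▸ e2.prop)
        simp only [hf, Sum.elim_inl] at hfv
        exact hc a b hadj hfv
  have hsat : ∀ i : Fin k, sat (SubdivArc H) (f ⁻¹' {i}) =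
      ∑ v ∈ Finset.univ.filter (fun v => f v = i), (R v).card := by
    intro i
    have hset : {u | Dominated (SubdivArc H) (f ⁻¹' {i}) u} =
        ↑((Finset.univ.filter (fun v => f v = i)).biUnion R) := by
      ext u
      simp only [Dominated, Set.mem_preimage, Set.mem_singleton_iff, Set.mem_setOf_eq,
        Finset.mem_coe, Finset.mem_biUnion, Finset.mem_filter, Finset.mem_univ, true_and,
        hR, Set.mem_toFinset]
    rw [sat, hset, Set.ncard_coe_finset]
    exact Finset.card_biUnion (fun x hx y hy hxy => hdisj x y (by
      simp only [Finset.coe_filter, Finset.mem_coe, Finset.mem_filter, Set.mem_setOf_eq] at hx hy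
      rw [hx.2, hy.2]) hxy)
  have htot : ∑ i, sat (SubdivArc H) (f ⁻¹' {i}) =
      ∑ v : V ⊕ H.edgeSet,
        {u : V ⊕ H.edgeSet | Relation.ReflTransGen (SubdivArc H) v u}.ncard := by
    simp_rw [hsat]
    rw [Finset.sum_fiberwise Finset.univ f (fun v => (R v).card)]
    refine Finset.sum_congr rfl fun v _ => ?_
    rw [hR, Set.ncard_eq_toFinset_card']
  have hds : ∀ P : Set (V ⊕ H.edgeSet),
      diss (SubdivArc H) P + sat (SubdivArc H) P = Fintype.card (V ⊕ H.edgeSet) := by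
    intro P
    rw [diss, sat]
    have hcompl : {u | ¬ Dominated (SubdivArc H) P u} = {u | Dominated (SubdivArc H) P u}ᶜ := by
      ext u; simp
    rw [hcompl, add_comm, Set.ncard_add_ncard_compl, Nat.card_eq_fintype_card]
  have hsum : ∑ i, diss (SubdivArc H) (f ⁻¹' {i}) + ∑ i, sat (SubdivArc H) (f ⁻¹' {i})
      = k * Fintype.card (V ⊕ H.edgeSet) := by
    rw [← Finset.sum_add_distrib]
    simp_rw [hds]
    simp [mul_comm]
  show ∑ i, diss (SubdivArc H) (f ⁻¹' {i}) = _
  rw [← htot]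
  omega
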